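/- Comparison principle for the discrete nonlinear reaction-diffusion equation: if $u^+(t,\cdot)$ is a supersolution and $u^-(t,\cdot)$ a subsolution of $\partial_t u(t,x) = \Delta^N \varphi(u(t,x)) + K f(u(t,x))$ on the discrete torus $\mathbb{T}^d_N$ (i.e. they satisfy the equation with $\ge$ and $\le$ respectively), and $u^-(0,x) \le u^+(0,x)$ for all $x$, then $u^-(t,x)\le u^+(t,x)$ for all $t\ge 0$ and all $x\in\mathbb{T}^d_N$. -/

import Mathlib

/-- The `i`-th unit vector in the discrete torus `(ℤ/Nℤ)^d`. -/
def unitVec (N d : ℕ) (i : Fin d) : Fin d → ZMod N := fun j => if j = i then 1 else 0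

/-- The discrete Laplacian `Δ^N v(x) = N² ∑ᵢ (v(x+eᵢ) + v(x-eᵢ) - 2 v(x))`. -/
noncomputable def discLap (N d : ℕ) (v : (Fin d → ZMod N) → ℝ) (x : Fin d → ZMod N) : ℝ :=
  (N : ℝ) ^ 2 * ∑ i : Fin d, (v (x + unitVec N d i) + v (x - unitVec N d i) - 2 * v x)

/-- Discrete Kato-type inequality: summing the discrete Laplacian of `h` over a set on which
`h ≥ 0`, while `h ≤ 0` off the set, gives a nonpositive result (summation by parts). -/
lemma sum_discLap_nonpos (N d : ℕ) [NeZero N] (h : (Fin d → ZMod N) → ℝ)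
    (S : Finset (Fin d → ZMod N))
    (hpos : ∀ x ∈ S, 0 ≤ h x) (hneg : ∀ x ∉ S, h x ≤ 0) :
    ∑ x ∈ S, discLap N d h x ≤ 0 := by
  classical
  set v : Fin d → (Fin d → ZMod N) := unitVec N d with hv
  set ind : (Fin d → ZMod N) → ℝ := fun x => if x ∈ S then 1 else 0 with hind
  have hrw : ∑ x ∈ S, discLap N d h x
      = ∑ x : (Fin d → ZMod N), ind x * discLap N d h x := by
    rw [show (∑ x : (Fin d → ZMod N), ind x * discLap N d h x)
        = ∑ x : (Fin d → ZMod N), (if x ∈ S then discLap N d h x else 0) from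
      Finset.sum_congr rfl fun x _ => by by_cases hx : x ∈ S <;> simp [ind, hx]]
    rw [Finset.sum_ite_mem, Finset.univ_inter]
  have key : ∀ i : Fin d,
      (∑ x : (Fin d → ZMod N), ind x * (h (x + v i) + h (x - v i) - 2 * h x))
      = ∑ x : (Fin d → ZMod N), (ind x - ind (x + v i)) * (h (x + v i) - h x) := by
    intro i
    have A : (∑ x : (Fin d → ZMod N), ind (x + v i) * (h x - h (x + v i)))
        = ∑ x : (Fin d → ZMod N), ind x * (h (x - v i) - h x) :=
      Fintype.sum_equiv (Equiv.addRight (v i)) _ _ (fun x => by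
        simp [Equiv.coe_addRight, add_sub_cancel_right])
    calc (∑ x : (Fin d → ZMod N), ind x * (h (x + v i) + h (x - v i) - 2 * h x))
        = ∑ x : (Fin d → ZMod N),
            (ind x * (h (x + v i) - h x) + ind x * (h (x - v i) - h x)) :=
          Finset.sum_congr rfl fun x _ => by ring
      _ = (∑ x : (Fin d → ZMod N), ind x * (h (x + v i) - h x))
          + ∑ x : (Fin d → ZMod N), ind x * (h (x - v i) - h x) := Finset.sum_add_distrib
      _ = (∑ x : (Fin d → ZMod N), ind x * (h (x + v i) - h x))
          + ∑ x : (Fin d → ZMod N), ind (x + v i) * (h x - h (x + v i)) := by rw [← A]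
      _ = ∑ x : (Fin d → ZMod N), (ind x - ind (x + v i)) * (h (x + v i) - h x) := by
          rw [← Finset.sum_add_distrib]
          exact Finset.sum_congr rfl fun x _ => by ring
  have hterm : ∀ i : Fin d, ∀ x : (Fin d → ZMod N),
      (ind x - ind (x + v i)) * (h (x + v i) - h x) ≤ 0 := by
    intro i x
    by_cases hx : x ∈ S <;> by_cases hy : x + v i ∈ S <;> simp [ind, hx, hy]
    · nlinarith [hpos x hx, hneg _ hy]
    · nlinarith [hneg x hx, hpos _ hy]
  calc ∑ x ∈ S, discLap N d h x
      = ∑ x : (Fin d → ZMod N), ind x * discLap N d h x := hrw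
    _ = ∑ x : (Fin d → ZMod N), ∑ i : Fin d,
          (N : ℝ) ^ 2 * (ind x * (h (x + v i) + h (x - v i) - 2 * h x)) := by
        refine Finset.sum_congr rfl fun x _ => ?_
        simp only [discLap, Finset.mul_sum]
        exact Finset.sum_congr rfl fun i _ => by ring
    _ = ∑ i : Fin d, ∑ x : (Fin d → ZMod N),
          (N : ℝ) ^ 2 * (ind x * (h (x + v i) + h (x - v i) - 2 * h x)) := Finset.sum_comm
    _ = ∑ i : Fin d, (N : ℝ) ^ 2 *
          ∑ x : (Fin d → ZMod N), ind x * (h (x + v i) + h (x - v i) - 2 * h x) := by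
        exact Finset.sum_congr rfl fun i _ => (Finset.mul_sum _ _ _).symm
    _ ≤ 0 := by
        refine Finset.sum_nonpos fun i _ => ?_
        rw [key i]
        exact mul_nonpos_of_nonneg_of_nonpos (by positivity)
          (Finset.sum_nonpos fun x _ => hterm i x)

/-- Comparison principle for the discrete nonlinear reaction-diffusion equation
`∂ₜ u = Δ^N φ(u) + K f(u)` on the discrete torus: a supersolution dominates a
subsolution for all `t ≥ 0` if it does so at `t = 0`. -/
theorem stmt4 (N d : ℕ) (hN : 0 < N)
    (φ f : ℝ → ℝ) (K : ℝ)
    (hφmono : StrictMono φ) (hφC1 : ContDiff ℝ 1 φ) (hfC1 : ContDiff ℝ 1 f)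
    (hK : 1 ≤ K)
    (up um dup dum : ℝ → (Fin d → ZMod N) → ℝ)
    (hupC1 : ∀ t x, HasDerivAt (fun s => up s x) (dup t x) t)
    (humC1 : ∀ t x, HasDerivAt (fun s => um s x) (dum t x) t)
    (hnonnegp : ∀ t x, 0 ≤ t → 0 ≤ up t x)
    (hnonnegm : ∀ t x, 0 ≤ t → 0 ≤ um t x)
    (hsuper : ∀ t x, 0 ≤ t →
      discLap N d (fun y => φ (up t y)) x + K * f (up t x) ≤ dup t x)
    (hsub : ∀ t x, 0 ≤ t →
      dum t x ≤ discLap N d (fun y => φ (um t y)) x + K * f (um t x))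
    (hinit : ∀ x, um 0 x ≤ up 0 x) :
    ∀ t x, 0 ≤ t → um t x ≤ up t x := by
  classical
  haveI : NeZero N := ⟨hN.ne'⟩
  intro T x₀ hT
  -- notation
  set w : ℝ → (Fin d → ZMod N) → ℝ := fun t x => um t x - up t x with hwdef
  set w' : ℝ → (Fin d → ZMod N) → ℝ := fun t x => dum t x - dup t x with hw'def
  have hw : ∀ t x, HasDerivAt (fun s => w s x) (w' t x) t :=
    fun t x => (humC1 t x).sub (hupC1 t x)
  have hwcont : ∀ x, Continuous (fun s => w s x) :=
    fun x => continuous_iff_continuousAt.2 fun t => (hw t x).continuousAt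
  set g : ℝ → ℝ := fun t => ∑ x : (Fin d → ZMod N), max (w t x) 0 with hgdef
  have hgcont : Continuous g :=
    continuous_finset_sum _ fun x _ => (hwcont x).max continuous_const
  -- uniform bound on [0, T]
  have hIcc : (Set.Icc (0:ℝ) T).Nonempty := Set.nonempty_Icc.2 hT
  obtain ⟨s₀, hs₀, hs₀max⟩ := isCompact_Icc.exists_isMaxOn hIcc
    ((continuous_finset_sum Finset.univ fun x _ =>
      ((continuous_iff_continuousAt.2 fun s => (humC1 s x).continuousAt).abs.add
      (continuous_iff_continuousAt.2 fun s => (hupC1 s x).continuousAt).abs)).continuousOn :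
      ContinuousOn (fun s => ∑ x : (Fin d → ZMod N), (|um s x| + |up s x|)) _)
  set C : ℝ := ∑ x : (Fin d → ZMod N), (|um s₀ x| + |up s₀ x|) with hCdef
  have hC0 : 0 ≤ C := Finset.sum_nonneg fun x _ => by positivity
  have hbound : ∀ s ∈ Set.Icc (0:ℝ) T, ∀ x, |um s x| ≤ C ∧ |up s x| ≤ C := by
    intro s hs x
    have h1 : |um s x| + |up s x| ≤ ∑ y : (Fin d → ZMod N), (|um s y| + |up s y|) :=
      Finset.single_le_sum (f := fun y => |um s y| + |up s y|)
        (fun y _ => by positivity) (Finset.mem_univ x)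
    have h2 := hs₀max hs
    simp only [Set.mem_setOf_eq, Pi.add_apply] at h2
    constructor <;> [nlinarith [abs_nonneg (up s x)]; nlinarith [abs_nonneg (um s x)]]
  -- Lipschitz constant for f on [-C, C]
  obtain ⟨y₀, hy₀, hy₀max⟩ := isCompact_Icc.exists_isMaxOn
    (Set.nonempty_Icc.2 (by linarith : -C ≤ C))
    ((hfC1.continuous_deriv le_rfl).abs.continuousOn :
      ContinuousOn (fun y => |deriv f y|) _)
  set L : ℝ := |deriv f y₀| with hLdef
  have hL0 : 0 ≤ L := abs_nonneg _
  have hLip : ∀ a ∈ Set.Icc (-C) C, ∀ b ∈ Set.Icc (-C) C, |f a - f b| ≤ L * |a - b| := by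
    intro a ha b hb
    have := Convex.norm_image_sub_le_of_norm_deriv_le (C := L)
      (fun y _ => (hfC1.differentiable one_ne_zero).differentiableAt)
      (fun y hy => by simpa using hy₀max hy) (convex_Icc (-C) C) hb ha
    simpa [Real.norm_eq_abs] using this
  set L' : ℝ := K * L with hL'def
  have hL'0 : 0 ≤ L' := mul_nonneg (by linarith) hL0
  set n : ℕ := Fintype.card (Fin d → ZMod N) with hndef
  -- the key differential inequality hypothesis for Grönwall
  have hgron : ∀ t ∈ Set.Icc (0:ℝ) T, g t ≤ gronwallBound 0 L' 0 (t - 0) := by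
    refine le_gronwallBound_of_liminf_deriv_right_le (f' := fun t => L' * g t)
      hgcont.continuousOn ?hf' ?ha ?bound
    case ha =>
      have : ∀ x : (Fin d → ZMod N), max (w 0 x) 0 = 0 :=
        fun x => max_eq_right (by simpa [hwdef, sub_nonpos] using hinit x)
      simp [hgdef, this]
    case bound => intro t _; simp
    case hf' =>
      intro t ht r hr
      have ht0 : 0 ≤ t := ht.1
      have htIcc : t ∈ Set.Icc (0:ℝ) T := Set.Ico_subset_Icc_self ht
      set S : Finset (Fin d → ZMod N) :=
        Finset.univ.filter (fun x => 0 < w t x ∨ (w t x = 0 ∧ 0 < w' t x)) with hSdef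
      have hmemS : ∀ x, x ∈ S ↔ (0 < w t x ∨ (w t x = 0 ∧ 0 < w' t x)) := by
        intro x; simp [hSdef]
      -- main estimate: ∑_{x ∈ S} w' t x ≤ L' * g t
      have hA : ∑ x ∈ S, w' t x ≤ L' * g t := by
        set h : (Fin d → ZMod N) → ℝ := fun y => φ (um t y) - φ (up t y) with hhdef
        have hlin : ∀ x, discLap N d (fun y => φ (um t y)) x
            - discLap N d (fun y => φ (up t y)) x = discLap N d h x := by
          intro x
          simp only [discLap, hhdef, ← mul_sub, ← Finset.sum_sub_distrib]
          congr 1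
          exact Finset.sum_congr rfl fun i _ => by ring
        have step1 : ∀ x ∈ S, w' t x ≤ discLap N d h x + K * (f (um t x) - f (up t x)) := by
          intro x hx
          have h1 := hsub t x ht0
          have h2 := hsuper t x ht0
          have := hlin x
          simp only [hw'def]
          linarith
        have hlap : ∑ x ∈ S, discLap N d h x ≤ 0 := by
          refine sum_discLap_nonpos N d h S ?_ ?_
          · intro x hx
            have hwx : 0 ≤ w t x := by
              rcases (hmemS x).1 hx with h | h
              · exact h.le
              · exact h.1.ge
            have : up t x ≤ um t x := by simpa [hwdef, sub_nonneg] using hwx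
            simpa [hhdef, sub_nonneg] using (hφmono.monotone this)
          · intro x hx
            have hwx : w t x ≤ 0 := by
              by_contra hcon
              exact hx ((hmemS x).2 (Or.inl (lt_of_not_ge fun h => hcon (by linarith))))
            have : um t x ≤ up t x := by simpa [hwdef, sub_nonpos] using hwx
            simpa [hhdef, sub_nonpos] using (hφmono.monotone this)
        have hreact : ∀ x ∈ S, K * (f (um t x) - f (up t x)) ≤ L' * max (w t x) 0 := by
          intro x hx
          have hwx : 0 ≤ w t x := by
            rcases (hmemS x).1 hx with h | h
            · exact h.le
            · exact h.1.ge
          have hum := (hbound t htIcc x).1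
          have hup := (hbound t htIcc x).2
          have hmem1 : um t x ∈ Set.Icc (-C) C := abs_le.1 hum
          have hmem2 : up t x ∈ Set.Icc (-C) C := abs_le.1 hup
          have hlipx := hLip (um t x) hmem1 (up t x) hmem2
          have habs : |um t x - up t x| = w t x := by
            rw [hwdef]; exact abs_of_nonneg hwx
          have h1 : f (um t x) - f (up t x) ≤ L * w t x := by
            calc f (um t x) - f (up t x) ≤ |f (um t x) - f (up t x)| := le_abs_self _
              _ ≤ L * |um t x - up t x| := hlipx
              _ = L * w t x := by rw [habs]
          have hmax : max (w t x) 0 = w t x := max_eq_left hwx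
          rw [hmax, hL'def, mul_assoc]
          exact mul_le_mul_of_nonneg_left h1 (by linarith)
        calc ∑ x ∈ S, w' t x
            ≤ ∑ x ∈ S, (discLap N d h x + K * (f (um t x) - f (up t x))) :=
              Finset.sum_le_sum step1
          _ = (∑ x ∈ S, discLap N d h x) + ∑ x ∈ S, K * (f (um t x) - f (up t x)) :=
              Finset.sum_add_distrib
          _ ≤ 0 + ∑ x ∈ S, L' * max (w t x) 0 :=
              add_le_add hlap (Finset.sum_le_sum hreact)
          _ ≤ ∑ x : (Fin d → ZMod N), L' * max (w t x) 0 := by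
              rw [zero_add]
              exact Finset.sum_le_sum_of_subset_of_nonneg (Finset.subset_univ S)
                (fun x _ _ => mul_nonneg hL'0 (le_max_right _ _))
          _ = L' * g t := by rw [hgdef, Finset.mul_sum]
      set A : ℝ := ∑ x ∈ S, w' t x with hAdef
      have hAr : A < r := lt_of_le_of_lt hA hr
      set ε : ℝ := (r - A) / (n + 1) with hεdef
      have hn1 : (0:ℝ) < (n:ℝ) + 1 := by positivity
      have hε0 : 0 < ε := div_pos (by linarith) hn1
      -- per-site eventual bound on the difference quotients
      have hsite : ∀ x : (Fin d → ZMod N), ∀ᶠ z in nhdsWithin t (Set.Ioi t),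
          (z - t)⁻¹ * (max (w z x) 0 - max (w t x) 0)
            ≤ (if x ∈ S then w' t x else 0) + ε := by
        intro x
        have hmono : nhdsWithin t (Set.Ioi t) ≤ nhdsWithin t {t}ᶜ :=
          nhdsWithin_mono t fun z hz => ne_of_gt hz
        have hslope : ∀ᶠ z in nhdsWithin t (Set.Ioi t),
            (z - t)⁻¹ * (w z x - w t x) < w' t x + ε := by
          have h1 := hasDerivAt_iff_tendsto_slope.1 (hw t x)
          have h2 : ∀ᶠ z in nhdsWithin t {t}ᶜ, slope (fun s => w s x) t z < w' t x + ε :=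
            h1.eventually_lt_const (lt_add_of_pos_right _ hε0)
          refine (h2.filter_mono hmono).mono fun z hz => ?_
          simpa [slope_def_field, div_eq_inv_mul] using hz
        have hgt : ∀ᶠ z in nhdsWithin t (Set.Ioi t), t < z := self_mem_nhdsWithin
        rcases lt_trichotomy (w t x) 0 with hwt | hwt | hwt
        · -- w t x < 0 : x ∉ S, quotient is eventually 0
          have hxS : x ∉ S := by
            rw [hmemS]; push_neg
            exact ⟨by linarith, fun h => absurd h (by linarith)⟩
          have hev : ∀ᶠ z in nhdsWithin t (Set.Ioi t), w z x < 0 :=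
            (((hwcont x).continuousAt (x := t)).eventually_lt_const hwt).filter_mono
              nhdsWithin_le_nhds
          refine hev.mono fun z hz => ?_
          rw [if_neg hxS, max_eq_right hz.le, max_eq_right hwt.le]
          simpa using hε0.le
        · -- w t x = 0
          refine (hslope.and hgt).mono fun z hz => ?_
          obtain ⟨hz1, hz2⟩ := hz
          have hinv : 0 < (z - t)⁻¹ := inv_pos.2 (by linarith)
          rw [hwt, max_self]
          by_cases hxS : x ∈ S
          · have hw'pos : 0 < w' t x := by
              rcases (hmemS x).1 hxS with h | h
              · exact absurd hwt (by linarith [h])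
              · exact h.2
            rw [if_pos hxS]
            rcases le_or_gt (w z x) 0 with hzx | hzx
            · rw [max_eq_right hzx]
              simp only [sub_self, sub_zero, mul_zero]
              linarith
            · rw [max_eq_left hzx.le, sub_zero]
              have := hz1; rw [hwt, sub_zero] at this
              linarith
          · have hw'np : w' t x ≤ 0 := by
              by_contra hcon
              exact hxS ((hmemS x).2 (Or.inr ⟨hwt, lt_of_not_ge hcon⟩))
            rw [if_neg hxS, zero_add]
            rcases le_or_gt (w z x) 0 with hzx | hzx
            · rw [max_eq_right hzx]
              simp only [sub_self, sub_zero, mul_zero]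
              linarith
            · rw [max_eq_left hzx.le, sub_zero]
              have h5 := hz1; rw [hwt, sub_zero] at h5
              have h6 : w' t x + ε ≤ ε := by linarith
              exact h5.le.trans h6
        · -- 0 < w t x : x ∈ S, quotient is eventually the slope
          have hxS : x ∈ S := (hmemS x).2 (Or.inl hwt)
          have hev : ∀ᶠ z in nhdsWithin t (Set.Ioi t), 0 < w z x :=
            (((hwcont x).continuousAt (x := t)).eventually_const_lt hwt).filter_mono
              nhdsWithin_le_nhds
          refine ((hslope.and hev)).mono fun z hz => ?_
          rw [if_pos hxS, max_eq_left hz.2.le, max_eq_left hwt.le]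
          linarith [hz.1]
      -- combine
      have hall : ∀ᶠ z in nhdsWithin t (Set.Ioi t),
          (z - t)⁻¹ * (g z - g t) < r := by
        have := (Filter.eventually_all.2 hsite).and
          (self_mem_nhdsWithin :
            ∀ᶠ z in nhdsWithin t (Set.Ioi t), z ∈ Set.Ioi t)
        refine this.mono fun z hz => ?_
        obtain ⟨hz1, hz2⟩ := hz
        have hsum : (z - t)⁻¹ * (g z - g t)
            = ∑ x : (Fin d → ZMod N), (z - t)⁻¹ * (max (w z x) 0 - max (w t x) 0) := by
          rw [hgdef, ← Finset.sum_sub_distrib, Finset.mul_sum]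
        have hle : (z - t)⁻¹ * (g z - g t)
            ≤ ∑ x : (Fin d → ZMod N), ((if x ∈ S then w' t x else 0) + ε) := by
          rw [hsum]; exact Finset.sum_le_sum fun x _ => hz1 x
        have hsplit : ∑ x : (Fin d → ZMod N), ((if x ∈ S then w' t x else 0) + ε)
            = A + (n : ℝ) * ε := by
          rw [Finset.sum_add_distrib, Finset.sum_const, nsmul_eq_mul, hAdef,
            Finset.sum_ite_mem, Finset.univ_inter, hndef, Finset.card_univ]
        have hkey : ((n:ℝ) + 1) * ε = r - A := by
          rw [hεdef]; field_simp
        have : A + (n:ℝ) * ε < r := by nlinarith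
        calc (z - t)⁻¹ * (g z - g t) ≤ A + (n:ℝ)*ε := by rw [← hsplit]; exact hle
          _ < r := this
      exact hall.frequently
  -- conclude
  have hgT : g T ≤ 0 := by
    have := hgron T (Set.right_mem_Icc.2 hT)
    rwa [gronwallBound_ε0_δ0] at this
  have hterm0 : max (w T x₀) 0 = 0 := by
    have hnonneg : ∀ x ∈ (Finset.univ : Finset (Fin d → ZMod N)), 0 ≤ max (w T x) 0 :=
      fun x _ => le_max_right _ _
    have hsum0 : g T = 0 := le_antisymm hgT (Finset.sum_nonneg hnonneg)
    exact (Finset.sum_eq_zero_iff_of_nonneg hnonneg).1 hsum0 x₀ (Finset.mem_univ x₀)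
  have : w T x₀ ≤ 0 := by
    by_contra hcon
    push_neg at hcon
    rw [max_eq_left hcon.le] at hterm0
    linarith
  simpa [hwdef, sub_nonpos] using this
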